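/- In the field of rational functions ℚ(v), set z = v/(1 + v + v²). For m ≥ 1 let B_m be the m × m matrix with entries (B_m)_{ii} = 1, (B_m)_{i,i−1} = −z, (B_m)_{ij} = −z for all j > i, and (B_m)_{ij} = 0 for j < i − 1, and let D_m = det B_m (with D_0 = 1). Then for every m ≥ 0, D_m = (1 + v)^{m−1} (1 − v^{m+2}) / ((1 − v)(1 + v + v²)^m), and consequently the recursion (1 + v + v²)² D_{m+2} − (1 + v + v²)(1 + v)² D_{m+1} + v(1 + v)² D_m = 0 holds with D_0 = D_1 = 1. -/

import Mathlib

noncomputable section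

open Matrix

/-! ### Auxiliary definitions and lemmas -/

private def ent (z : RatFunc ℚ) (i j : ℕ) : RatFunc ℚ :=
  if i = j then 1 else if i = j + 1 then -z else if i < j then -z else 0

private def Bmat (z : RatFunc ℚ) (m : ℕ) : Matrix (Fin m) (Fin m) (RatFunc ℚ) :=
  Matrix.of fun i j => ent z i j

private def Emat (z : RatFunc ℚ) (m : ℕ) : Matrix (Fin m) (Fin m) (RatFunc ℚ) :=
  Matrix.of fun i j => if (i:ℕ) = 0 then -z else ent z i j

private lemma ent_succ (z : RatFunc ℚ) (i j : ℕ) : ent z (i+1) (j+1) = ent z i j := by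
  unfold ent; split_ifs <;> first | rfl | omega

private lemma ent_zero_succ (z : RatFunc ℚ) (j : ℕ) : ent z 0 (j+1) = -z := by
  unfold ent; rw [if_neg (by omega), if_neg (by omega), if_pos (by omega)]

private lemma ent_two_zero (z : RatFunc ℚ) (i : ℕ) : ent z (i+2) 0 = 0 := by
  unfold ent; rw [if_neg (by omega), if_neg (by omega), if_neg (by omega)]

private lemma ent_zero_zero (z : RatFunc ℚ) : ent z 0 0 = 1 := by
  unfold ent; rw [if_pos rfl]

private lemma ent_one_zero (z : RatFunc ℚ) : ent z 1 0 = -z := by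
  unfold ent; rw [if_neg (by omega), if_pos (by omega)]

private lemma succAbove_one_val (m : ℕ) (i : Fin (m+1)) :
    (((1 : Fin (m+2)).succAbove i) : ℕ) = if (i:ℕ) < 1 then (i:ℕ) else (i:ℕ)+1 := by
  rw [Fin.succAbove]
  split_ifs with h h1 h2 <;> simp_all [Fin.lt_def, Fin.coe_castSucc, Fin.val_succ]

private lemma subB_zero (z : RatFunc ℚ) (m : ℕ) :
    ((Bmat z (m+2)).submatrix (Fin.succAbove 0) Fin.succ) = Bmat z (m+1) := by
  ext i j
  simp only [Matrix.submatrix_apply, Fin.succAbove_zero, Bmat, Matrix.of_apply, Fin.val_succ]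
  exact ent_succ z i j

private lemma subB_one (z : RatFunc ℚ) (m : ℕ) :
    ((Bmat z (m+2)).submatrix (Fin.succAbove 1) Fin.succ) = Emat z (m+1) := by
  ext i j
  simp only [Matrix.submatrix_apply, Bmat, Emat, Matrix.of_apply, Fin.val_succ]
  rw [succAbove_one_val]
  by_cases h : (i:ℕ) < 1
  · rw [if_pos h, if_pos (by omega : (i:ℕ) = 0), (by omega : (i:ℕ) = 0), ent_zero_succ]
  · rw [if_neg h, if_neg (by omega : ¬ (i:ℕ) = 0), ent_succ]

private lemma subE_zero (z : RatFunc ℚ) (m : ℕ) :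
    ((Emat z (m+2)).submatrix (Fin.succAbove 0) Fin.succ) = Bmat z (m+1) := by
  ext i j
  simp only [Matrix.submatrix_apply, Fin.succAbove_zero, Bmat, Emat, Matrix.of_apply,
    Fin.val_succ]
  rw [if_neg (by omega : ¬ (i:ℕ)+1 = 0), ent_succ]

private lemma subE_one (z : RatFunc ℚ) (m : ℕ) :
    ((Emat z (m+2)).submatrix (Fin.succAbove 1) Fin.succ) = Emat z (m+1) := by
  ext i j
  simp only [Matrix.submatrix_apply, Bmat, Emat, Matrix.of_apply, Fin.val_succ]
  rw [succAbove_one_val]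
  by_cases h : (i:ℕ) < 1
  · rw [if_pos h, if_pos (by omega : (i:ℕ) = 0), (by omega : (i:ℕ) = 0), if_pos rfl]
  · rw [if_neg h, if_neg (by omega : ¬ (i:ℕ) = 0),
      if_neg (by omega : ¬ (i:ℕ)+1 = 0), ent_succ]

private lemma detB_rec (z : RatFunc ℚ) (m : ℕ) :
    (Bmat z (m+2)).det = (Bmat z (m+1)).det + z * (Emat z (m+1)).det := by
  rw [Matrix.det_succ_column_zero, Fin.sum_univ_succ, Fin.sum_univ_succ]
  have h0 : ∀ i : Fin m, Bmat z (m+2) (Fin.succ (Fin.succ i)) 0 = 0 := by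
    intro i
    show ent z (((i:ℕ)+1)+1) 0 = 0
    rw [(by omega : ((i:ℕ)+1)+1 = (i:ℕ)+2), ent_two_zero]
  rw [Finset.sum_eq_zero (fun i _ => by rw [h0 i]; ring)]
  have e0 : Bmat z (m+2) 0 0 = 1 := ent_zero_zero z
  have e1 : Bmat z (m+2) (Fin.succ 0) 0 = -z := ent_one_zero z
  rw [e0, e1, show (Fin.succ 0 : Fin (m+2)) = 1 from rfl, subB_zero, subB_one]
  simp

private lemma detE_rec (z : RatFunc ℚ) (m : ℕ) :
    (Emat z (m+2)).det = z * (Emat z (m+1)).det - z * (Bmat z (m+1)).det := by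
  rw [Matrix.det_succ_column_zero, Fin.sum_univ_succ, Fin.sum_univ_succ]
  have h0 : ∀ i : Fin m, Emat z (m+2) (Fin.succ (Fin.succ i)) 0 = 0 := by
    intro i
    show (if ((i:ℕ)+1)+1 = 0 then -z else ent z (((i:ℕ)+1)+1) 0) = 0
    rw [if_neg (by omega), (by omega : ((i:ℕ)+1)+1 = (i:ℕ)+2), ent_two_zero]
  rw [Finset.sum_eq_zero (fun i _ => by rw [h0 i]; ring)]
  have e0 : Emat z (m+2) 0 0 = -z := by
    show (if (0:ℕ) = 0 then -z else ent z 0 0) = -z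
    rw [if_pos rfl]
  have e1 : Emat z (m+2) (Fin.succ 0) 0 = -z := by
    show (if (1:ℕ) = 0 then -z else ent z 1 0) = -z
    rw [if_neg (by omega), ent_one_zero]
  rw [e0, e1, show (Fin.succ 0 : Fin (m+2)) = 1 from rfl, subE_zero, subE_one]
  simp
  ring

private lemma detB_zero (z : RatFunc ℚ) : (Bmat z 0).det = 1 := Matrix.det_fin_zero

private lemma detB_one (z : RatFunc ℚ) : (Bmat z 1).det = 1 := by
  rw [Matrix.det_fin_one]; exact ent_zero_zero z

private lemma detE_one (z : RatFunc ℚ) : (Emat z 1).det = -z := by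
  rw [Matrix.det_fin_one]
  show (if (0:ℕ) = 0 then -z else ent z 0 0) = -z
  rw [if_pos rfl]

private lemma detB_three (z : RatFunc ℚ) : ∀ n, (Bmat z (n+2)).det
    = (1+z) * (Bmat z (n+1)).det - (z + z^2) * (Bmat z n).det := by
  intro n
  cases n with
  | zero =>
    rw [detB_rec, detB_zero, detB_one, detE_one]; ring
  | succ n =>
    linear_combination detB_rec z (n+1) + z * detE_rec z n - z * detB_rec z n

private lemma poly_ne (p : Polynomial ℚ) (h : p.coeff 1 ≠ 0) :
    algebraMap (Polynomial ℚ) (RatFunc ℚ) p ≠ 0 := by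
  apply RatFunc.algebraMap_ne_zero
  intro hp; rw [hp] at h; simp at h

private lemma one_add_X_ne : (1 + RatFunc.X : RatFunc ℚ) ≠ 0 := by
  have := poly_ne (1 + Polynomial.X) (by simp [Polynomial.coeff_one])
  simpa [map_add, RatFunc.algebraMap_X] using this

private lemma one_sub_X_ne : (1 - RatFunc.X : RatFunc ℚ) ≠ 0 := by
  have := poly_ne (1 - Polynomial.X) (by simp [Polynomial.coeff_one])
  simpa [map_sub, RatFunc.algebraMap_X] using this

private lemma s_ne : (1 + RatFunc.X + RatFunc.X ^ 2 : RatFunc ℚ) ≠ 0 := by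
  have := poly_ne (1 + Polynomial.X + Polynomial.X ^ 2)
    (by simp [Polynomial.coeff_one, Polynomial.coeff_X_pow])
  simpa [map_add, map_pow, RatFunc.algebraMap_X] using this

private def gfun (m : ℕ) : RatFunc ℚ :=
  (1+RatFunc.X)^m * (1 - RatFunc.X^(m+2)) /
    ((1+RatFunc.X) * ((1-RatFunc.X) * (1+RatFunc.X+RatFunc.X^2)^m))

private lemma den_ne (m : ℕ) :
    ((1+RatFunc.X) * ((1-RatFunc.X) * (1+RatFunc.X+RatFunc.X^2)^m) : RatFunc ℚ) ≠ 0 :=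
  mul_ne_zero one_add_X_ne (mul_ne_zero one_sub_X_ne (pow_ne_zero _ s_ne))

private lemma f_eq_g (m : ℕ) :
    (1 + RatFunc.X) ^ ((m : ℤ) - 1) * (1 - RatFunc.X ^ (m + 2)) /
        ((1 - RatFunc.X) * (1 + RatFunc.X + RatFunc.X ^ 2) ^ m) = gfun m := by
  rw [gfun, zpow_sub₀ one_add_X_ne, zpow_natCast, zpow_one,
    div_mul_eq_mul_div, div_div]

private lemma g_zero : gfun 0 = 1 := by
  rw [gfun, div_eq_one_iff_eq (den_ne 0)]; ring

private lemma g_one : gfun 1 = 1 := by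
  rw [gfun, div_eq_one_iff_eq (den_ne 1)]; ring

private lemma g_rec (z : RatFunc ℚ)
    (hz : z = RatFunc.X / (1 + RatFunc.X + RatFunc.X ^ 2)) (n : ℕ) :
    gfun (n+2) = (1+z) * gfun (n+1) - (z + z^2) * gfun n := by
  have hs := s_ne
  have e1 : 1 + z = (1+RatFunc.X+RatFunc.X^2 + RatFunc.X) / (1+RatFunc.X+RatFunc.X^2) := by
    rw [hz]; field_simp
  have e0 : z + z^2 = (RatFunc.X*(1+RatFunc.X+RatFunc.X^2) + RatFunc.X^2) /
      (1+RatFunc.X+RatFunc.X^2)^2 := by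
    rw [hz]; field_simp
  rw [e1, e0, gfun, gfun, gfun, div_mul_div_comm, div_mul_div_comm,
    div_sub_div _ _ (mul_ne_zero hs (den_ne (n+1)))
      (mul_ne_zero (pow_ne_zero 2 hs) (den_ne n)),
    div_eq_div_iff (den_ne (n+2))
      (mul_ne_zero (mul_ne_zero hs (den_ne (n+1)))
        (mul_ne_zero (pow_ne_zero 2 hs) (den_ne n)))]
  ring

/-- with the substitution `z = v/(1 + v + v²)` in `ℚ(v)`, let `B_m` be the
`m × m` matrix with diagonal entries `1`, entries `-z` on the subdiagonal and everywhere
strictly above the diagonal, and `0` elsewhere, and `D_m = det B_m` (so `D_0 = 1`).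
Then `D_m = (1+v)^{m-1}(1 - v^{m+2})/((1-v)(1+v+v²)^m)` for every `m ≥ 0`, and
consequently `(1+v+v²)² D_{m+2} - (1+v+v²)(1+v)² D_{m+1} + v(1+v)² D_m = 0`
with `D_0 = D_1 = 1`. -/
theorem deutsch_strip_determinant
    (z : RatFunc ℚ)
    (hz : z = RatFunc.X / (1 + RatFunc.X + RatFunc.X ^ 2))
    (B : (m : ℕ) → Matrix (Fin m) (Fin m) (RatFunc ℚ))
    (hB : ∀ m, B m = Matrix.of fun (i j : Fin m) =>
      if (i : ℕ) = (j : ℕ) then 1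
      else if (i : ℕ) = (j : ℕ) + 1 then -z
      else if (i : ℕ) < (j : ℕ) then -z
      else 0)
    (D : ℕ → RatFunc ℚ) (hD : ∀ m, D m = (B m).det) :
    (∀ m : ℕ, D m = (1 + RatFunc.X) ^ ((m : ℤ) - 1) * (1 - RatFunc.X ^ (m + 2)) /
        ((1 - RatFunc.X) * (1 + RatFunc.X + RatFunc.X ^ 2) ^ m)) ∧
    (∀ m : ℕ, (1 + RatFunc.X + RatFunc.X ^ 2) ^ 2 * D (m + 2)
        - (1 + RatFunc.X + RatFunc.X ^ 2) * (1 + RatFunc.X) ^ 2 * D (m + 1)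
        + RatFunc.X * (1 + RatFunc.X) ^ 2 * D m = 0) ∧
    D 0 = 1 ∧ D 1 = 1 := by
  have hBB : ∀ m, B m = Bmat z m := fun m => (hB m).trans rfl
  have key : ∀ m, (Bmat z m).det = gfun m ∧ (Bmat z (m+1)).det = gfun (m+1) := by
    intro m
    induction m with
    | zero => exact ⟨by rw [detB_zero, g_zero], by rw [detB_one, g_one]⟩
    | succ n ih =>
      refine ⟨ih.2, ?_⟩
      show (Bmat z (n+2)).det = gfun (n+2)
      rw [detB_three z n, ih.1, ih.2, ← g_rec z hz n]
  have hDg : ∀ m, D m = gfun m := fun m => by rw [hD, hBB, (key m).1]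
  have hzs : z * (1 + RatFunc.X + RatFunc.X ^ 2) = RatFunc.X := by
    rw [hz, div_mul_cancel₀ _ s_ne]
  refine ⟨fun m => by rw [hDg m, f_eq_g], fun m => ?_, by rw [hDg, g_zero], by rw [hDg, g_one]⟩
  rw [hDg m, hDg (m+1), hDg (m+2), g_rec z hz m]
  linear_combination ((1+RatFunc.X+RatFunc.X^2) * gfun (m+1)
    - ((1+RatFunc.X+RatFunc.X^2) + z*(1+RatFunc.X+RatFunc.X^2) + RatFunc.X) * gfun m) * hzs
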